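/- Let 0 → K →ʲ L →q M → 0 be a short exact sequence of abelian groups with L torsion-free, G a finite abelian group, and let Φ_G : ker(j ⊗ id_G) → Hom(Ĝ, M) be the canonical isomorphism. For α ∈ ker(j ⊗ id_G), the homomorphism Φ_G(α) is injective if and only if α does not lie in the image of K ⊗ G' → K ⊗ G for any proper subgroup G' of G. -/

import Mathlib

/-- The group `ℚ/ℤ`. -/
abbrev QZ : Type := ℚ ⧸ AddSubgroup.zmultiples (1 : ℚ)

variable {K L G : Type*} [AddCommGroup K] [AddCommGroup L] [AddCommGroup G]

/-- `j ⊗ id_{G'} : K ⊗ G' → L ⊗ G'` for a subgroup `G'` of `G`. -/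
noncomputable def tmap (j : K →+ L) (G' : AddSubgroup G) :
    TensorProduct ℤ K G' →ₗ[ℤ] TensorProduct ℤ L G' :=
  TensorProduct.map j.toIntLinearMap LinearMap.id

/-- The canonical map `K ⊗ G' → K ⊗ G` induced by the inclusion `G' ⊆ G`
(with `G` viewed as its own top subgroup). -/
noncomputable def tincl (K : Type*) [AddCommGroup K] {G : Type*} [AddCommGroup G]
    (G' : AddSubgroup G) :
    TensorProduct ℤ K G' →ₗ[ℤ] TensorProduct ℤ K (⊤ : AddSubgroup G) :=
  TensorProduct.map LinearMap.id (AddSubgroup.inclusion le_top).toIntLinearMap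

/-- Restriction of characters `Ĝ → Ĝ'` dual to the inclusion `G' ⊆ G`. -/
def dresHom {G : Type*} [AddCommGroup G] (G' : AddSubgroup G) :
    ((⊤ : AddSubgroup G) →+ QZ) →+ (G' →+ QZ) :=
  AddMonoidHom.mk' (fun χ => χ.comp (AddSubgroup.inclusion le_top))
    (fun _ _ => by ext _; rfl)

namespace Phi13

/-- The element `1/n` in `ℚ/ℤ`. -/
noncomputable def qx (n : ℕ) : QZ := QuotientAddGroup.mk ((n : ℚ)⁻¹)

lemma nsmul_qx (n : ℕ) (hn : n ≠ 0) : (n : ℤ) • qx n = 0 := by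
  have h1 : ((n : ℤ) • ((n : ℚ)⁻¹) : ℚ) = 1 := by
    rw [zsmul_eq_mul]
    push_cast
    field_simp
  show ((n : ℤ) • (QuotientAddGroup.mk ((n : ℚ)⁻¹) : QZ)) = 0
  rw [← QuotientAddGroup.mk_zsmul, QuotientAddGroup.eq_zero_iff, h1]
  exact AddSubgroup.mem_zmultiples _

lemma exists_zsmul_qx {n : ℕ} (hn : n ≠ 0) {y : QZ} (h : (n : ℤ) • y = 0) :
    ∃ k : ℤ, y = k • qx n := by
  obtain ⟨r, rfl⟩ := QuotientAddGroup.mk_surjective y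
  have h2 : ((n : ℤ) • r : ℚ) ∈ AddSubgroup.zmultiples (1 : ℚ) := by
    have h3 : ((QuotientAddGroup.mk ((n : ℤ) • r) : QZ)) = 0 := by
      rw [QuotientAddGroup.mk_zsmul]; exact h
    exact (QuotientAddGroup.eq_zero_iff _).mp h3
  obtain ⟨m, hm⟩ := AddSubgroup.mem_zmultiples_iff.mp h2
  refine ⟨m, ?_⟩
  have hr : r = m • ((n : ℚ)⁻¹) := by
    have hn' : (n : ℚ) ≠ 0 := Nat.cast_ne_zero.mpr hn
    rw [zsmul_eq_mul] at hm ⊢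
    rw [zsmul_eq_mul] at hm
    field_simp at hm ⊢
    push_cast at hm
    linarith
  rw [hr]
  show (QuotientAddGroup.mk' (AddSubgroup.zmultiples (1:ℚ))) (m • ((n : ℚ)⁻¹)) =
    m • (QuotientAddGroup.mk' (AddSubgroup.zmultiples (1:ℚ))) ((n : ℚ)⁻¹)
  exact map_zsmul (QuotientAddGroup.mk' _) m _

/-- Key lemma: if `ψ` vanishes wherever `χ` does (on a finite abelian group), then
`ψ` is an integer multiple of `χ`. -/
lemma exists_factor {A : Type*} [AddCommGroup A] [Finite A] (χ ψ : A →+ QZ)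
    (h : ∀ a, χ a = 0 → ψ a = 0) : ∃ k : ℤ, ∀ a, ψ a = k • χ a := by
  have hA : Nonempty A := ⟨0⟩
  set n := Nat.card A with hn
  have hn0 : n ≠ 0 := Nat.card_pos.ne'
  -- factor ψ through the range of χ
  set e := QuotientAddGroup.quotientKerEquivRange χ with he
  have hlift : ∀ a ∈ χ.ker, ψ a = 0 := fun a ha => h a ha
  set ψbar := QuotientAddGroup.lift χ.ker ψ hlift with hψbar
  set φ : χ.range →+ QZ := ψbar.comp e.symm.toAddMonoidHom with hφdef
  have hφ : ∀ a : A, φ ⟨χ a, ⟨a, rfl⟩⟩ = ψ a := by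
    intro a
    have he1 : e (QuotientAddGroup.mk a) = ⟨χ a, ⟨a, rfl⟩⟩ := rfl
    rw [hφdef]
    show ψbar (e.symm ⟨χ a, ⟨a, rfl⟩⟩) = ψ a
    rw [← he1, AddEquiv.symm_apply_apply]
    rfl
  -- extend φ along the inclusion of the range of χ into QZ
  obtain ⟨Θ, hΘ⟩ := CharacterModule.dual_surjective_of_injective
    (χ.range.subtype.toIntLinearMap) Subtype.val_injective (φ : CharacterModule χ.range)
  have hΘφ : ∀ x : χ.range, Θ (x : QZ) = φ x := fun x => DFunLike.congr_fun hΘ x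
  -- Θ on qx n is an integer multiple of qx n
  obtain ⟨k, hk⟩ := exists_zsmul_qx hn0 (y := Θ (qx n))
    (by rw [← map_zsmul Θ, nsmul_qx n hn0, map_zero])
  refine ⟨k, fun a => ?_⟩
  have hna : (n : ℤ) • χ a = 0 := by
    rw [← map_zsmul χ, natCast_zsmul, hn, card_nsmul_eq_zero', map_zero]
  obtain ⟨m, hm⟩ := exists_zsmul_qx hn0 hna
  calc ψ a = φ ⟨χ a, ⟨a, rfl⟩⟩ := (hφ a).symm
    _ = Θ (χ a) := (hΘφ _).symm
    _ = Θ (m • qx n) := by rw [← hm]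
    _ = m • Θ (qx n) := map_zsmul Θ m _
    _ = m • (k • qx n) := by rw [hk]
    _ = k • (m • qx n) := smul_comm m k _
    _ = k • χ a := by rw [← hm]

/-- A torsion-free abelian group is flat as a `ℤ`-module. -/
lemma flat_of_torsionfree {L : Type*} [AddCommGroup L]
    (hLtf : ∀ (l : L) (n : ℕ), n ≠ 0 → n • l = 0 → l = 0) : Module.Flat ℤ L := by
  rw [Module.Flat.iff_rTensor_injective']
  intro I
  obtain ⟨n, hI⟩ := (IsPrincipalIdealRing.principal I).principal
  subst hI
  set N : Ideal ℤ := Submodule.span ℤ {n} with hN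
  have hmem : n ∈ N := Submodule.mem_span_singleton_self n
  have hrepr : ∀ x : TensorProduct ℤ N L, ∃ l : L, x = (⟨n, hmem⟩ : N) ⊗ₜ[ℤ] l := by
    intro x
    induction x using TensorProduct.induction_on with
    | zero => exact ⟨0, (TensorProduct.tmul_zero _ _).symm⟩
    | tmul i l =>
      obtain ⟨c, hc⟩ := Submodule.mem_span_singleton.mp i.2
      refine ⟨c • l, ?_⟩
      rw [show i = c • (⟨n, hmem⟩ : N) from Subtype.ext (by simpa using hc.symm)]
      rw [TensorProduct.smul_tmul]
    | add x y hx hy =>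
      obtain ⟨l₁, rfl⟩ := hx
      obtain ⟨l₂, rfl⟩ := hy
      exact ⟨l₁ + l₂, (TensorProduct.tmul_add _ _ _).symm⟩
  rw [injective_iff_map_eq_zero]
  intro x hx
  obtain ⟨l, rfl⟩ := hrepr x
  rw [LinearMap.rTensor_tmul] at hx
  have h2 : (n : ℤ) • l = 0 := by
    have h3 := congrArg (TensorProduct.lid ℤ L) hx
    simpa using h3
  by_cases hzero : n = 0
  · subst hzero
    rw [show (⟨(0 : ℤ), hmem⟩ : N) = 0 from rfl, TensorProduct.zero_tmul]
  · have hl : l = 0 := by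
      apply hLtf l n.natAbs (Int.natAbs_ne_zero.mpr hzero)
      rcases Int.natAbs_eq n with hcase | hcase
      · rw [← natCast_zsmul, ← hcase, h2]
      · rw [← natCast_zsmul, show ((n.natAbs : ℤ)) = -n by omega, neg_zsmul, h2, neg_zero]
    rw [hl, TensorProduct.tmul_zero]

/-- For a proper subgroup `G'` of a finite abelian group `G`, there is a nonzero character
of `G` (viewed as `⊤`) vanishing on `G'`. -/
lemma exists_char {G : Type*} [AddCommGroup G] [Finite G] {G' : AddSubgroup G} (hlt : G' < ⊤) :
    ∃ χ : (⊤ : AddSubgroup G) →+ QZ, χ ≠ 0 ∧ dresHom G' χ = 0 := by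
  obtain ⟨g, -, hg⟩ := SetLike.exists_of_lt hlt
  set H : AddSubgroup (⊤ : AddSubgroup G) := G'.comap (⊤ : AddSubgroup G).subtype with hH
  set a : (⊤ : AddSubgroup G) := ⟨g, AddSubgroup.mem_top g⟩ with ha
  have haH : a ∉ H := hg
  have h0 : (QuotientAddGroup.mk a : (⊤ : AddSubgroup G) ⧸ H) ≠ 0 :=
    fun hcontr => haH ((QuotientAddGroup.eq_zero_iff a).mp hcontr)
  obtain ⟨c, hc⟩ := CharacterModule.exists_character_apply_ne_zero_of_ne_zero h0
  refine ⟨(c : ((⊤ : AddSubgroup G) ⧸ H) →+ QZ).comp (QuotientAddGroup.mk' H), ?_, ?_⟩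
  · intro hzero
    apply hc
    have := DFunLike.congr_fun hzero a
    exact this
  · ext x
    show c (QuotientAddGroup.mk (AddSubgroup.inclusion le_top x)) = 0
    have hx : AddSubgroup.inclusion (le_top : G' ≤ ⊤) x ∈ H := x.2
    rw [(QuotientAddGroup.eq_zero_iff _).mpr hx, map_zero]

/-- Restriction of characters to a subgroup is surjective
 (`ℚ/ℤ` is divisible, hence injective). -/
lemma dres_surjective {G : Type*} [AddCommGroup G] (G' : AddSubgroup G) :
    Function.Surjective (dresHom (G := G) G') := by
  intro φ
  obtain ⟨Θ, hΘ⟩ := CharacterModule.dual_surjective_of_injective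
    ((AddSubgroup.inclusion (le_top : G' ≤ ⊤)).toIntLinearMap)
    (fun x y hxy => AddSubgroup.inclusion_injective le_top (by exact hxy))
    (φ : CharacterModule G')
  exact ⟨Θ, by ext x; exact DFunLike.congr_fun hΘ x⟩

end Phi13

/-- with `0 → K → L → M → 0` exact, `L` torsion-free, `G` finite
abelian, and `Φ` the (natural in subgroups of `G`) family of canonical isomorphisms
`ker(j ⊗ id) ≅ Hom(Ĝ', M)`, the homomorphism `Φ_G(α)` is injective iff `α` does not
lie in the image of `K ⊗ G'` for any proper subgroup `G'` of `G`. -/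
theorem Phi_injective_iff {K L M G : Type*}
    [AddCommGroup K] [AddCommGroup L] [AddCommGroup M] [AddCommGroup G] [Finite G]
    (j : K →+ L) (q : L →+ M)
    (hj : Function.Injective j) (hq : Function.Surjective q)
    (hexact : ∀ l : L, (∃ k : K, j k = l) ↔ q l = 0)
    (hLtf : ∀ (l : L) (n : ℕ), n ≠ 0 → n • l = 0 → l = 0)
    (Φ : ∀ G' : AddSubgroup G,
      (LinearMap.ker (tmap j G')) ≃+ ((G' →+ QZ) →+ M))
    (hnat : ∀ (G' : AddSubgroup G) (α' : LinearMap.ker (tmap j G'))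
      (β : LinearMap.ker (tmap j (⊤ : AddSubgroup G))),
      (β : TensorProduct ℤ K (⊤ : AddSubgroup G)) = tincl K G' (α' : TensorProduct ℤ K G') →
      Φ ⊤ β = (Φ G' α').comp (dresHom G'))
    (α : LinearMap.ker (tmap j (⊤ : AddSubgroup G))) :
    Function.Injective (Φ ⊤ α) ↔
      ∀ G' : AddSubgroup G, G' < ⊤ →
        (α : TensorProduct ℤ K (⊤ : AddSubgroup G)) ∉ Set.range (tincl K G') := by
  haveI : Module.Flat ℤ L := Phi13.flat_of_torsionfree hLtf
  have hcomm : ∀ (G' : AddSubgroup G) (x : TensorProduct ℤ K G'),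
      tmap j ⊤ (tincl K G' x) = tincl L G' (tmap j G' x) := by
    intro G' x
    induction x using TensorProduct.induction_on with
    | zero => simp
    | tmul k y => rfl
    | add x y hx hy => simp [map_add, hx, hy]
  have htincl_eq : ∀ G' : AddSubgroup G, tincl L G' =
      LinearMap.lTensor L (AddSubgroup.inclusion (le_top : G' ≤ ⊤)).toIntLinearMap :=
    fun _ => rfl
  constructor
  · rintro hinj G' hlt ⟨α', hα'⟩
    have hker : tmap j G' α' = 0 := by
      apply Module.Flat.lTensor_preserves_injective_linearMap
        (M := L) (AddSubgroup.inclusion (le_top : G' ≤ ⊤)).toIntLinearMap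
        (fun x y hxy => AddSubgroup.inclusion_injective le_top (by exact hxy))
      rw [map_zero]
      refine (hcomm G' α').symm.trans ?_
      rw [hα']
      exact LinearMap.mem_ker.mp α.2
    set α'' : LinearMap.ker (tmap j G') := ⟨α', hker⟩ with hα''
    have hΦ := hnat G' α'' α (by rw [hα'']; exact hα'.symm)
    obtain ⟨χ, hχne, hχ0⟩ := Phi13.exists_char hlt
    apply hχne
    apply hinj
    rw [hΦ, map_zero]
    show (Φ G' α'') (dresHom G' χ) = 0
    rw [hχ0, map_zero]
  · intro hcond
    rw [injective_iff_map_eq_zero]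
    intro χ hχ0
    by_contra hχ
    set G' : AddSubgroup G := χ.ker.map (⊤ : AddSubgroup G).subtype with hG'
    obtain ⟨a, ha⟩ := DFunLike.ne_iff.mp hχ
    have hlt : G' < ⊤ := by
      refine lt_of_le_of_ne le_top fun htop => ?_
      have hmem : (a : G) ∈ G' := by rw [htop]; exact AddSubgroup.mem_top _
      obtain ⟨b, hb, hba⟩ := hmem
      have hb' : χ b = 0 := hb
      exact ha (by rw [← Subtype.ext hba]; simpa using hb')
    have hvan : ∀ ψ : (⊤ : AddSubgroup G) →+ QZ, dresHom G' ψ = 0 → Φ ⊤ α ψ = 0 := by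
      intro ψ hψ
      obtain ⟨k, hk⟩ := Phi13.exists_factor χ ψ (fun x hx => by
        have hmem : (x : G) ∈ G' := ⟨x, hx, rfl⟩
        have h1 := DFunLike.congr_fun hψ (⟨(x : G), hmem⟩ : G')
        exact h1)
      have hψχ : ψ = k • χ := AddMonoidHom.ext fun x => by
        rw [hk x]; rfl
      rw [hψχ, map_zsmul, hχ0, smul_zero]
    have hsur : Function.Surjective (dresHom (G := G) G') := Phi13.dres_surjective G'
    set e := QuotientAddGroup.quotientKerEquivOfSurjective _ hsur with he
    set f : (G' →+ QZ) →+ M :=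
      (QuotientAddGroup.lift (dresHom (G := G) G').ker (Φ ⊤ α)
        (by intro ψ hψ; exact hvan ψ hψ)).comp e.symm.toAddMonoidHom with hfdef
    have hf : ∀ ψ : (⊤ : AddSubgroup G) →+ QZ, f (dresHom G' ψ) = Φ ⊤ α ψ := by
      intro ψ
      have h1 : e.symm (dresHom G' ψ) = QuotientAddGroup.mk ψ := by
        apply e.injective
        rw [AddEquiv.apply_symm_apply]
        rfl
      rw [hfdef, AddMonoidHom.comp_apply]
      rw [show e.symm.toAddMonoidHom (dresHom G' ψ) = QuotientAddGroup.mk ψ from h1]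
      rfl
    set α' := (Φ G').symm f with hα'def
    have hβmem : tincl K G' (α' : TensorProduct ℤ K G') ∈ LinearMap.ker (tmap j ⊤) := by
      rw [LinearMap.mem_ker, hcomm, LinearMap.mem_ker.mp α'.2, map_zero]
    set β : LinearMap.ker (tmap j (⊤ : AddSubgroup G)) := ⟨_, hβmem⟩ with hβ
    have hnb := hnat G' α' β rfl
    have heq : Φ ⊤ β = Φ ⊤ α := by
      rw [hnb, hα'def, (Φ G').apply_symm_apply]
      exact AddMonoidHom.ext fun ψ => hf ψ
    have hβα : β = α := (Φ ⊤).injective heq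
    exact hcond G' hlt ⟨α', by rw [← hβα]⟩
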